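/- Let ρ : ℝ → ℝ be p-times differentiable with ρ^{(p)} being (r-p)-Hölder continuous for some r with p < r ≤ p+1, with Hölder constant H. Let W : ℝ → ℝ be integrable with ∫ W = 1, ∫ y^l W(y) dy = 0 for l = 1,…,p, and ∫ |y|^r |W(y)| dy < ∞. Then for every h > 0, sup_{x∈ℝ} |(ρ ∗ h^{-1}W(·/h))(x) - ρ(x)| ≤ (H h^r / p!) ∫_ℝ |y|^r |W(y)| dy. -/

import Mathlib

open MeasureTheory Set

lemma iterWithin_eq {N k : ℕ} (hk : k ≤ N) {f : ℝ → ℝ} (hf : ContDiff ℝ N f)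
    {s : Set ℝ} (hs : UniqueDiffOn ℝ s) {x : ℝ} (hx : x ∈ s) :
    iteratedDerivWithin k f s x = iteratedDeriv k f x := by
  rw [iteratedDerivWithin_eq_iteratedFDerivWithin, iteratedDeriv_eq_iteratedFDeriv]
  have h : HasFTaylorSeriesUpTo (N : ℕ∞) f (ftaylorSeries ℝ f) :=
    contDiff_iff_ftaylorSeries.mp hf
  rw [← (h.hasFTaylorSeriesUpToOn s).eq_iteratedFDerivWithin_of_uniqueDiffOn
      (by exact_mod_cast hk) hs hx, h.eq_iteratedFDeriv (by exact_mod_cast hk) x]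

lemma taylor_one_sided (p : ℕ) (r H : ℝ) (hpr : (p:ℝ) < r) (hH : 0 ≤ H)
    (ρ : ℝ → ℝ) (hρ : ContDiff ℝ p ρ)
    (hHold : ∀ x y : ℝ, |iteratedDeriv p ρ x - iteratedDeriv p ρ y| ≤ H * |x - y| ^ (r - p))
    (a b : ℝ) (hba : b < a) :
    |ρ a - ∑ k ∈ Finset.range (p+1),
        iteratedDeriv k ρ b * (a - b)^k / (Nat.factorial k)| ≤
      H / (Nat.factorial p) * (a - b) ^ r := by
  have hd : (0:ℝ) < a - b := by linarith
  cases p with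
  | zero =>
    have := hHold a b
    simp only [Nat.cast_zero, sub_zero, iteratedDeriv_zero] at this
    rw [abs_of_pos hd] at this
    simpa [Finset.range_one, Finset.sum_singleton, Nat.factorial_zero,
      iteratedDeriv_zero] using this
  | succ n =>
    set p := n + 1 with hp
    have hudo : UniqueDiffOn ℝ (Icc b a) := uniqueDiffOn_Icc hba
    have hcd : ContDiffOn ℝ n ρ (Icc b a) :=
      (hρ.of_le (by exact_mod_cast Nat.le_succ n)).contDiffOn
    have hdiff : DifferentiableOn ℝ (iteratedDerivWithin n ρ (Icc b a)) (Ioo b a) := by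
      have h1 : Differentiable ℝ (iteratedDeriv n ρ) :=
        hρ.differentiable_iteratedDeriv n (by exact_mod_cast Nat.lt_succ_self n)
      refine (h1.differentiableOn).congr fun y hy => ?_
      exact iterWithin_eq (Nat.le_succ n) hρ hudo (Ioo_subset_Icc_self hy)
    have hL := taylor_mean_remainder_lagrange (f := ρ) (n := n) hba.ne
      (by rwa [uIcc_of_le hba.le]) (by rwa [uIcc_of_le hba.le, uIoo_of_lt hba])
    rw [uIcc_of_le hba.le, uIoo_of_lt hba] at hL
    obtain ⟨c, hc, heq⟩ := hL
    have hcIcc : c ∈ Icc b a := Ioo_subset_Icc_self hc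
    rw [iterWithin_eq le_rfl hρ hudo hcIcc] at heq
    have htay : taylorWithinEval ρ n (Icc b a) b a =
        ∑ k ∈ Finset.range (n+1), iteratedDeriv k ρ b * (a - b)^k / (Nat.factorial k) := by
      rw [taylor_within_apply]
      refine Finset.sum_congr rfl fun k hk => ?_
      rw [iterWithin_eq ((Nat.le_of_lt_succ (Finset.mem_range.mp hk)).trans (Nat.le_succ n))
        hρ hudo (left_mem_Icc.mpr hba.le), smul_eq_mul]
      ring
    have hsum : ∑ k ∈ Finset.range (p+1),
        iteratedDeriv k ρ b * (a - b)^k / (Nat.factorial k) =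
        taylorWithinEval ρ n (Icc b a) b a +
          iteratedDeriv p ρ b * (a - b)^p / (Nat.factorial p) := by
      rw [Finset.sum_range_succ, htay]
    have key : ρ a - ∑ k ∈ Finset.range (p+1),
        iteratedDeriv k ρ b * (a - b)^k / (Nat.factorial k) =
        (iteratedDeriv p ρ c - iteratedDeriv p ρ b) * (a - b)^p / (Nat.factorial p) := by
      rw [hsum]
      have : ρ a - taylorWithinEval ρ n (Icc b a) b a =
          iteratedDeriv p ρ c * (a - b) ^ p / (Nat.factorial p) := heq
      rw [sub_add_eq_sub_sub, this]; ring
    rw [key, abs_div, abs_mul]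
    have hfac : |((Nat.factorial p : ℝ))| = (Nat.factorial p : ℝ) := by
      rw [abs_of_pos]; exact_mod_cast Nat.factorial_pos p
    have habs : |(a - b)^p| = (a-b)^p := abs_of_pos (pow_pos hd p)
    rw [hfac, habs, div_mul_eq_mul_div]
    have hfacpos : (0:ℝ) < (Nat.factorial p : ℝ) := by exact_mod_cast Nat.factorial_pos p
    gcongr ?_ / _
    have hstep : |iteratedDeriv p ρ c - iteratedDeriv p ρ b| ≤ H * (a - b) ^ (r - p) := by
      refine (hHold c b).trans ?_
      have h1 : |c - b| ≤ a - b := by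
        rw [abs_of_pos (by linarith [hc.1] : (0:ℝ) < c - b)]; linarith [hc.2]
      exact mul_le_mul_of_nonneg_left
        (Real.rpow_le_rpow (abs_nonneg _) h1 (by push_cast at hpr ⊢; linarith)) hH
    calc |iteratedDeriv p ρ c - iteratedDeriv p ρ b| * (a-b)^p
        ≤ H * (a - b) ^ (r - p) * (a-b)^p :=
          mul_le_mul_of_nonneg_right hstep (by positivity)
      _ = H * (a - b) ^ r := by
          rw [mul_assoc, ← Real.rpow_natCast (a-b) p, ← Real.rpow_add hd]
          norm_num

lemma iter_comp_const_sub (n : ℕ) (f : ℝ → ℝ) (c t : ℝ) :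
    iteratedDeriv n (fun x => f (c - x)) t = (-1 : ℝ) ^ n * iteratedDeriv n f (c - t) := by
  have h1 := iteratedDeriv_comp_neg n (fun z => f (c + z)) t
  simp only [← sub_eq_add_neg] at h1
  rw [h1, iteratedDeriv_comp_const_add, smul_eq_mul, sub_eq_add_neg]


lemma taylor_bound (p : ℕ) (r H : ℝ) (hpr : (p:ℝ) < r) (hH : 0 ≤ H)
    (ρ : ℝ → ℝ) (hρ : ContDiff ℝ p ρ)
    (hHold : ∀ x y : ℝ, |iteratedDeriv p ρ x - iteratedDeriv p ρ y| ≤ H * |x - y| ^ (r - p))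
    (a b : ℝ) :
    |ρ a - ∑ k ∈ Finset.range (p+1),
        iteratedDeriv k ρ b * (a - b)^k / (Nat.factorial k)| ≤
      H / (Nat.factorial p) * |a - b| ^ r := by
  rcases lt_trichotomy b a with hba | heq | hab
  · have := taylor_one_sided p r H hpr hH ρ hρ hHold a b hba
    rwa [abs_of_pos (sub_pos.mpr hba)]
  · subst heq
    have hr0 : r ≠ 0 := ((Nat.cast_nonneg p).trans_lt hpr).ne'
    rw [sub_self, abs_zero, Real.zero_rpow hr0, mul_zero]
    have hsum : ∑ k ∈ Finset.range (p+1),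
        iteratedDeriv k ρ b * (0:ℝ)^k / (Nat.factorial k) = ρ b := by
      rw [Finset.sum_eq_single_of_mem 0 (Finset.mem_range.mpr (Nat.succ_pos p))]
      · simp
      · intro k _ hk
        simp [sub_self, zero_pow hk]
    rw [hsum, sub_self, abs_zero]
  · set g : ℝ → ℝ := fun t => ρ (a + b - t) with hg
    have hgc : ContDiff ℝ p g := hρ.comp (contDiff_const.sub contDiff_id)
    have hgHold : ∀ x y : ℝ,
        |iteratedDeriv p g x - iteratedDeriv p g y| ≤ H * |x - y| ^ (r - p) := by
      intro x y
      rw [hg, iter_comp_const_sub, iter_comp_const_sub, ← mul_sub, abs_mul, abs_pow, abs_neg,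
        abs_one, one_pow, one_mul]
      have := hHold (a + b - x) (a + b - y)
      rw [show a + b - x - (a + b - y) = y - x by ring, abs_sub_comm y x] at this
      exact this
    have key := taylor_one_sided p r H hpr hH g hgc hgHold b a hab
    have hgb : g b = ρ a := by rw [hg]; norm_num
    have hsum : ∑ k ∈ Finset.range (p+1),
        iteratedDeriv k g a * (b - a)^k / (Nat.factorial k) =
        ∑ k ∈ Finset.range (p+1),
        iteratedDeriv k ρ b * (a - b)^k / (Nat.factorial k) := by
      refine Finset.sum_congr rfl fun k _ => ?_
      have hx : (a - b)^k = (-1:ℝ)^k * (b-a)^k := by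
        rw [show (a-b) = -(b-a) by ring, neg_pow]
      rw [hg, iter_comp_const_sub, show a + b - a = b by ring, hx]
      ring
    rw [hgb, hsum] at key
    rw [show |a - b| = b - a by rw [abs_sub_comm]; exact abs_of_pos (sub_pos.mpr hab)]
    exact key


theorem stmt6 (p : ℕ) (r H h : ℝ) (hpr : (p:ℝ) < r) (hr : r ≤ (p:ℝ) + 1)
    (hH : 0 ≤ H) (hh : 0 < h) (ρ W : ℝ → ℝ)
    (hρ : ContDiff ℝ p ρ)
    (hHold : ∀ x y : ℝ,
      |iteratedDeriv p ρ x - iteratedDeriv p ρ y| ≤ H * |x - y| ^ (r - p))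
    (hW : Integrable W) (hW1 : ∫ y, W y = 1)
    (hWl : ∀ l : ℕ, 1 ≤ l → l ≤ p → ∫ y, y^l * W y = 0)
    (hWr : Integrable (fun y => |y| ^ r * |W y|))
    (hconv : ∀ x : ℝ, Integrable (fun y => ρ (x - y*h) * W y)) :
    ∀ x : ℝ, |(∫ y, ρ (x - y*h) * W y) - ρ x|
      ≤ H * h ^ r / (Nat.factorial p) * ∫ y, |y| ^ r * |W y| := by
  intro x
  set c : ℕ → ℝ := fun k => iteratedDeriv k ρ x * (-h)^k / (Nat.factorial k) with hc
  -- integrability of y^k * W y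
  have hIk : ∀ k, k ≤ p → Integrable (fun y => y^k * W y) := by
    intro k hk
    refine (hW.abs.add hWr).mono
      ((continuous_pow k).aestronglyMeasurable.mul hW.1) ?_
    filter_upwards with y
    have h1 : |y|^k ≤ 1 + |y|^r := by
      rcases le_or_gt |y| 1 with hy | hy
      · have h2 : |y|^k ≤ 1 := pow_le_one₀ (abs_nonneg y) hy
        have h3 : (0:ℝ) ≤ |y|^r := Real.rpow_nonneg (abs_nonneg y) r
        linarith
      · have h2 : |y|^(k:ℝ) ≤ |y|^r :=
          Real.rpow_le_rpow_of_exponent_le hy.le ((Nat.cast_le.mpr hk).trans hpr.le)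
        rw [← Real.rpow_natCast |y| k]
        linarith
    have hWy : (0:ℝ) ≤ |W y| + |y|^r * |W y| := by positivity
    simp only [Real.norm_eq_abs, abs_mul, abs_pow, Pi.add_apply, abs_of_nonneg hWy]
    have h4 : (0:ℝ) ≤ |y|^r := Real.rpow_nonneg (abs_nonneg y) r
    nlinarith [abs_nonneg (W y), abs_nonneg y, pow_nonneg (abs_nonneg y) k]
  have hrw : (fun y => (∑ k ∈ Finset.range (p+1), c k * y^k) * W y)
      = fun y => ∑ k ∈ Finset.range (p+1), c k * (y^k * W y) := by
    ext y
    rw [Finset.sum_mul]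
    exact Finset.sum_congr rfl fun k _ => by ring
  have hSint : Integrable (fun y => (∑ k ∈ Finset.range (p+1), c k * y^k) * W y) := by
    rw [hrw]
    exact integrable_finset_sum _ fun k hk =>
      ((hIk k (Nat.le_of_lt_succ (Finset.mem_range.mp hk))).const_mul (c k))
  have hSval : (∫ y, (∑ k ∈ Finset.range (p+1), c k * y^k) * W y) = ρ x := by
    rw [hrw, integral_finset_sum _ fun k hk =>
      ((hIk k (Nat.le_of_lt_succ (Finset.mem_range.mp hk))).const_mul (c k))]
    have : ∀ k ∈ Finset.range (p+1), (∫ y, c k * (y^k * W y)) = c k * ∫ y, y^k * W y :=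
      fun k _ => integral_const_mul _ _
    rw [Finset.sum_congr rfl this,
      Finset.sum_eq_single_of_mem 0 (Finset.mem_range.mpr (Nat.succ_pos p))]
    · simp only [pow_zero, one_mul, hW1, hc, iteratedDeriv_zero, Nat.factorial_zero]
      norm_num
    · intro k hk hk0
      rw [hWl k (Nat.one_le_iff_ne_zero.mpr hk0)
        (Nat.le_of_lt_succ (Finset.mem_range.mp hk)), mul_zero]
  have hkey : (∫ y, ρ (x - y*h) * W y) - ρ x
      = ∫ y, (ρ (x - y*h) - ∑ k ∈ Finset.range (p+1), c k * y^k) * W y := by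
    have : (fun y => (ρ (x - y*h) - ∑ k ∈ Finset.range (p+1), c k * y^k) * W y)
        = fun y => ρ (x - y*h) * W y
          - (∑ k ∈ Finset.range (p+1), c k * y^k) * W y := by
      ext y; ring
    rw [this, integral_sub (hconv x) hSint, hSval]
  rw [hkey]
  have hbound : ∀ y : ℝ,
      |ρ (x - y*h) - ∑ k ∈ Finset.range (p+1), c k * y^k| * |W y|
        ≤ H * h^r / (Nat.factorial p) * (|y|^r * |W y|) := by
    intro y
    have htb := taylor_bound p r H hpr hH ρ hρ hHold (x - y*h) x
    have hterm : ∀ k ∈ Finset.range (p+1),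
        iteratedDeriv k ρ x * (x - y*h - x)^k / (Nat.factorial k) = c k * y^k := by
      intro k _
      rw [show x - y*h - x = (-h)*y by ring, mul_pow, hc]
      ring
    rw [Finset.sum_congr rfl hterm] at htb
    have habs : |x - y*h - x| = |y| * h := by
      rw [show x - y*h - x = -(y*h) by ring, abs_neg, abs_mul, abs_of_pos hh]
    rw [habs, Real.mul_rpow (abs_nonneg y) hh.le] at htb
    calc |ρ (x - y*h) - ∑ k ∈ Finset.range (p+1), c k * y^k| * |W y|
        ≤ H / (Nat.factorial p) * (|y|^r * h^r) * |W y| :=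
          mul_le_mul_of_nonneg_right htb (abs_nonneg _)
      _ = H * h^r / (Nat.factorial p) * (|y|^r * |W y|) := by ring
  calc |∫ y, (ρ (x - y*h) - ∑ k ∈ Finset.range (p+1), c k * y^k) * W y|
      ≤ ∫ y, |ρ (x - y*h) - ∑ k ∈ Finset.range (p+1), c k * y^k| * |W y| := by
        simpa [Real.norm_eq_abs, abs_mul] using norm_integral_le_integral_norm
          (μ := (volume : Measure ℝ))
          (fun y => (ρ (x - y*h) - ∑ k ∈ Finset.range (p+1), c k * y^k) * W y)
    _ ≤ ∫ y, H * h^r / (Nat.factorial p) * (|y|^r * |W y|) :=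
        integral_mono_of_nonneg (Filter.Eventually.of_forall fun y =>
            mul_nonneg (abs_nonneg _) (abs_nonneg _))
          (hWr.const_mul _) (Filter.Eventually.of_forall hbound)
    _ = H * h^r / (Nat.factorial p) * ∫ y, |y|^r * |W y| := integral_const_mul _ _
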